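/- For every positive semidefinite complex d×d matrix ρ whose rank equals r, there exists a matrix V : Matrix (Fin d) (Fin r) ℂ such that VᴴV = 1_r, V·(Vᴴ·ρ·V)·Vᴴ = ρ, and Vᴴ·ρ·V is positive definite. In other words, every quantum state of rank r can be compressed losslessly (encoding E(ρ) = VᴴρV, decoding D(σ) = VσVᴴ) and maximally efficiently (the compressed state has full support) into an r-dimensional system. -/

import Mathlib

open Matrix
open scoped ComplexOrder

theorem stmt5 (d r : ℕ) (ρ : Matrix (Fin d) (Fin d) ℂ)
    (hρ : ρ.PosSemidef) (hrank : ρ.rank = r) :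
    ∃ V : Matrix (Fin d) (Fin r) ℂ,
      Vᴴ * V = 1 ∧ V * (Vᴴ * ρ * V) * Vᴴ = ρ ∧ (Vᴴ * ρ * V).PosDef := by
  classical
  have hH := hρ.1
  set U : Matrix (Fin d) (Fin d) ℂ := (hH.eigenvectorUnitary : Matrix (Fin d) (Fin d) ℂ) with hU
  have hcard : Fintype.card (Fin r) = Fintype.card {i // hH.eigenvalues i ≠ 0} := by
    rw [Fintype.card_fin, ← hH.rank_eq_card_non_zero_eigs, hrank]
  let e : Fin r ≃ {i // hH.eigenvalues i ≠ 0} := Fintype.equivOfCardEq hcard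
  let g : Fin r → Fin d := fun k => (e k).1
  have hg : Function.Injective g := fun a b hab => e.injective (Subtype.ext hab)
  set V : Matrix (Fin d) (Fin r) ℂ := U.submatrix id g with hVdef
  have hVH : Vᴴ = Uᴴ.submatrix g id := by ext k i; rfl
  have hUU : Uᴴ * U = 1 := by
    have := Matrix.mem_unitaryGroup_iff'.mp hH.eigenvectorUnitary.2
    simpa [hU, Matrix.star_eq_conjTranspose] using this
  have hVV : Vᴴ * V = 1 := by
    rw [hVH, hVdef, ← Matrix.submatrix_mul Uᴴ U g id g Function.bijective_id, hUU,
      Matrix.submatrix_one g hg]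
  have hdiag : Uᴴ * ρ * U = Matrix.diagonal (RCLike.ofReal ∘ hH.eigenvalues) := by
    have := hH.conjStarAlgAut_star_eigenvectorUnitary
    simpa [hU, Matrix.star_eq_conjTranspose] using this
  have hVρV : Vᴴ * ρ * V = Matrix.diagonal (fun k => (hH.eigenvalues (g k) : ℂ)) := by
    have h1 : Vᴴ * ρ = (Uᴴ * ρ).submatrix g id := by
      rw [hVH]; exact (Matrix.submatrix_mul Uᴴ ρ g id id Function.bijective_id).symm
    have h2 : Vᴴ * ρ * V = (Uᴴ * ρ * U).submatrix g g := by
      rw [h1, hVdef]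
      exact (Matrix.submatrix_mul (Uᴴ * ρ) U g id g Function.bijective_id).symm
    rw [h2, hdiag, Matrix.submatrix_diagonal _ g hg]
    rfl
  have hpos : ∀ k, (0 : ℂ) < (hH.eigenvalues (g k) : ℂ) := by
    intro k
    rw [Complex.zero_lt_real]
    exact lt_of_le_of_ne (hρ.eigenvalues_nonneg (g k)) (Ne.symm (e k).2)
  refine ⟨V, hVV, ?_, ?_⟩
  · rw [hVρV]
    have hspec : ρ = U * Matrix.diagonal (RCLike.ofReal ∘ hH.eigenvalues) * Uᴴ := by
      have := hH.spectral_theorem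
      simpa [hU, Matrix.star_eq_conjTranspose] using this
    ext i j
    have lhs : (V * Matrix.diagonal (fun k => (hH.eigenvalues (g k) : ℂ)) * Vᴴ) i j
        = ∑ k, U i (g k) * (hH.eigenvalues (g k) : ℂ) * star (U j (g k)) := by
      simp only [Matrix.mul_apply, Matrix.diagonal_apply, Matrix.conjTranspose_apply, hVdef,
        Matrix.submatrix_apply, id_eq, mul_ite, ite_mul, zero_mul, mul_zero,
        Finset.sum_ite_eq, Finset.sum_ite_eq', Finset.mem_univ, if_true]
    have rhs : ρ i j = ∑ m, U i m * (hH.eigenvalues m : ℂ) * star (U j m) := by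
      conv_lhs => rw [hspec]
      simp only [Matrix.mul_apply, Matrix.diagonal_apply, Matrix.conjTranspose_apply,
        Function.comp_apply, mul_ite, ite_mul, zero_mul, mul_zero,
        Finset.sum_ite_eq, Finset.sum_ite_eq', Finset.mem_univ, if_true]
      rfl
    rw [lhs, rhs]
    set F : Fin d → ℂ := fun m => U i m * (hH.eigenvalues m : ℂ) * star (U j m) with hF
    have hzero : ∀ m, hH.eigenvalues m = 0 → F m = 0 := by
      intro m hm; simp [hF, hm]
    calc ∑ k, F (g k) = ∑ s : {i // hH.eigenvalues i ≠ 0}, F s.1 :=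
          Equiv.sum_comp e (fun s => F s.1)
      _ = ∑ m ∈ Finset.univ.filter (fun m => hH.eigenvalues m ≠ 0), F m :=
          (Finset.sum_subtype _ (by simp) F).symm
      _ = ∑ m, F m := Finset.sum_filter_of_ne (fun m _ hFm => fun hev => hFm (hzero m hev))
  · rw [hVρV]
    exact Matrix.PosDef.diagonal hpos
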